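/- The double integral ∬_{[0,1]²} (1−x)/((1+xy)(−ln(xy))) dx dy equals ln(4/π). -/

import Mathlib

open MeasureTheory Set Filter intervalIntegral
open scoped Topology Real

noncomputable def gg (t : ℝ) : ℝ := ((1 + t) * (-Real.log t))⁻¹

lemma gg_meas : Measurable gg :=
  ((measurable_const.add measurable_id).mul Real.measurable_log.neg).inv

lemma inv_le_inv_aux {a b : ℝ} (ha : 0 < a) (hab : a ≤ b) : b⁻¹ ≤ a⁻¹ := by
  rw [inv_eq_one_div, inv_eq_one_div]
  exact one_div_le_one_div_of_le ha hab

lemma neg_log_pos {t : ℝ} (ht : t ∈ Ioo (0:ℝ) 1) : 0 < -Real.log t := by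
  have := Real.log_neg ht.1 ht.2; linarith

lemma neg_log_anti {t x : ℝ} (ht : 0 < t) (htx : t ≤ x) (hx : x ∈ Ioo (0:ℝ) 1) :
    (-Real.log t)⁻¹ ≤ (-Real.log x)⁻¹ := by
  apply inv_le_inv_aux (neg_log_pos hx)
  have : Real.log t ≤ Real.log x := Real.log_le_log ht htx
  linarith

lemma one_sub_le_neg_log {t : ℝ} (ht : t ∈ Ioo (0:ℝ) 1) : 1 - t ≤ -Real.log t := by
  have := Real.log_le_sub_one_of_pos ht.1; linarith

lemma gg_nonneg {t : ℝ} (ht : t ∈ Ioo (0:ℝ) 1) : 0 ≤ gg t := by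
  have h1 := neg_log_pos ht
  have h2 : (0:ℝ) < 1 + t := by linarith [ht.1]
  unfold gg; positivity

lemma gg_le {t : ℝ} (ht : t ∈ Ioo (0:ℝ) 1) : gg t ≤ (-Real.log t)⁻¹ := by
  have h1 := neg_log_pos ht
  have h2 : (0:ℝ) < 1 + t := by linarith [ht.1]
  unfold gg
  rw [mul_inv]
  have h3 : (1 + t)⁻¹ ≤ 1 := by
    rw [inv_eq_one_div]
    rw [div_le_one h2]
    linarith [ht.1]
  calc (1+t)⁻¹ * (-Real.log t)⁻¹ ≤ 1 * (-Real.log t)⁻¹ := by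
        apply mul_le_mul_of_nonneg_right h3 (by positivity)
    _ = (-Real.log t)⁻¹ := one_mul _

lemma one_sub_mul_gg_le {t : ℝ} (ht : t ∈ Ioo (0:ℝ) 1) : (1 - t) * gg t ≤ 1 := by
  have h1 := neg_log_pos ht
  have h3 := one_sub_le_neg_log ht
  have h4 := gg_le ht
  have h5 : (1 - t) * gg t ≤ (-Real.log t) * (-Real.log t)⁻¹ :=
    mul_le_mul h3 h4 (gg_nonneg ht) h1.le
  rwa [mul_inv_cancel₀ h1.ne'] at h5

lemma one_sub_div_neg_log_le {t : ℝ} (ht : t ∈ Ioo (0:ℝ) 1) : (1 - t) / (-Real.log t) ≤ 1 := by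
  have h1 := neg_log_pos ht
  rw [div_le_one h1]; exact one_sub_le_neg_log ht

lemma integrable_of_bdd {f : ℝ → ℝ} {s : Set ℝ} (hs : MeasurableSet s) (hμ : volume s < ⊤)
    (hf : AEStronglyMeasurable f (volume.restrict s)) (C : ℝ) (h : ∀ t ∈ s, ‖f t‖ ≤ C) :
    Integrable f (volume.restrict s) := by
  haveI : IsFiniteMeasure (volume.restrict s) := ⟨by rwa [Measure.restrict_apply_univ]⟩
  exact (integrable_const C).mono' hf ((ae_restrict_iff' hs).2 (ae_of_all _ h))

lemma vol_Ioo_lt_top (a b : ℝ) : volume (Ioo a b) < ⊤ := by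
  rw [Real.volume_Ioo]; exact ENNReal.ofReal_lt_top

instance fin_Ioo (a b : ℝ) : IsFiniteMeasure (volume.restrict (Ioo a b)) :=
  ⟨by rw [Measure.restrict_apply_univ]; exact vol_Ioo_lt_top a b⟩

/-! ### Frullani-type integral -/

lemma frullani (n : ℕ) :
    ∫ t in Ioo (0:ℝ) 1, t ^ n * (1 - t) / (-Real.log t)
      = Real.log (n + 2) - Real.log (n + 1) := by
  have hle : (n:ℝ) ≤ n + 1 := by linarith
  have hmeas : Measurable (fun p : ℝ × ℝ => Real.exp (p.2 * Real.log p.1)) :=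
    Real.measurable_exp.comp (measurable_snd.mul (Real.measurable_log.comp measurable_fst))
  have hInt : Integrable (Function.uncurry fun t s : ℝ => Real.exp (s * Real.log t))
      ((volume.restrict (Ioo (0:ℝ) 1)).prod (volume.restrict (Ioo (n:ℝ) (n+1)))) := by
    refine (integrable_const (1:ℝ)).mono' hmeas.aestronglyMeasurable ?_
    rw [Measure.prod_restrict]
    filter_upwards [ae_restrict_mem (measurableSet_Ioo.prod measurableSet_Ioo)] with p hp
    obtain ⟨hp1, hp2⟩ := hp
    simp only [mem_Ioo] at hp1 hp2
    have hlog : Real.log p.1 < 0 := Real.log_neg hp1.1 hp1.2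
    have hs : (0:ℝ) ≤ p.2 := le_trans (Nat.cast_nonneg n) hp2.1.le
    simp only [Function.uncurry]
    rw [Real.norm_eq_abs, abs_of_pos (Real.exp_pos _), Real.exp_le_one_iff]
    exact mul_nonpos_of_nonneg_of_nonpos hs hlog.le
  have hinner : ∀ t ∈ Ioo (0:ℝ) 1,
      (∫ s in Ioo (n:ℝ) (n+1), Real.exp (s * Real.log t)) = t ^ n * (1 - t) / (-Real.log t) := by
    intro t ht
    have hlog : Real.log t < 0 := Real.log_neg ht.1 ht.2
    have hlogne : Real.log t ≠ 0 := hlog.ne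
    have hderiv : ∀ s ∈ uIcc (n:ℝ) (n+1),
        HasDerivAt (fun s => Real.exp (s * Real.log t) / Real.log t)
          (Real.exp (s * Real.log t)) s := by
      intro s _
      have h1 : HasDerivAt (fun s : ℝ => s * Real.log t) (Real.log t) s :=
        hasDerivAt_mul_const _
      have h2 := (Real.hasDerivAt_exp (s * Real.log t)).comp s h1
      have h3 := h2.div_const (Real.log t)
      simpa [mul_div_cancel_right₀ _ hlogne] using h3
    have hcont : IntervalIntegrable (fun s => Real.exp (s * Real.log t)) volume (n:ℝ) (n+1) :=
      (Real.continuous_exp.comp (continuous_id.mul continuous_const)).intervalIntegrable _ _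
    rw [← integral_Ioc_eq_integral_Ioo, ← intervalIntegral.integral_of_le hle]
    rw [intervalIntegral.integral_eq_sub_of_hasDerivAt hderiv hcont]
    have he : ∀ k : ℕ, Real.exp ((k:ℝ) * Real.log t) = t ^ k := by
      intro k
      rw [Real.exp_nat_mul, Real.exp_log ht.1]
    have he1 : Real.exp (((n:ℝ)+1) * Real.log t) = t ^ (n+1) := by
      have := he (n+1); push_cast at this; exact this
    rw [he1, he n, pow_succ, div_sub_div_same, div_neg, ← neg_div]
    congr 1
    ring
  have hslice : ∀ s ∈ Ioo (n:ℝ) (n+1),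
      (∫ t in Ioo (0:ℝ) 1, Real.exp (s * Real.log t)) = (s+1)⁻¹ := by
    intro s hs
    have hs0 : (0:ℝ) ≤ s := le_trans (Nat.cast_nonneg n) hs.1.le
    have h1 : (∫ t in Ioo (0:ℝ) 1, Real.exp (s * Real.log t)) = ∫ t in Ioo (0:ℝ) 1, t ^ s := by
      apply setIntegral_congr_fun measurableSet_Ioo
      intro t ht
      show Real.exp (s * Real.log t) = t ^ s
      rw [Real.rpow_def_of_pos ht.1, mul_comm]
    rw [h1, ← integral_Ioc_eq_integral_Ioo,
      ← intervalIntegral.integral_of_le (by norm_num : (0:ℝ) ≤ 1)]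
    rw [integral_rpow (Or.inl (by linarith : (-1:ℝ) < s))]
    rw [Real.one_rpow, Real.zero_rpow (by linarith : s + 1 ≠ 0)]
    rw [sub_zero, one_div]
  calc ∫ t in Ioo (0:ℝ) 1, t ^ n * (1 - t) / (-Real.log t)
      = ∫ t in Ioo (0:ℝ) 1, ∫ s in Ioo (n:ℝ) (n+1), Real.exp (s * Real.log t) :=
        (setIntegral_congr_fun measurableSet_Ioo hinner).symm
    _ = ∫ s in Ioo (n:ℝ) (n+1), ∫ t in Ioo (0:ℝ) 1, Real.exp (s * Real.log t) :=
        integral_integral_swap hInt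
    _ = ∫ s in Ioo (n:ℝ) (n+1), (s+1)⁻¹ :=
        setIntegral_congr_fun measurableSet_Ioo hslice
    _ = Real.log (n + 2) - Real.log (n + 1) := by
        rw [← integral_Ioc_eq_integral_Ioo, ← intervalIntegral.integral_of_le hle]
        have h3 : (∫ s in (n:ℝ)..(n+1), (s+1)⁻¹) = ∫ u in ((n:ℝ)+1)..((n:ℝ)+1+1), u⁻¹ :=
          intervalIntegral.integral_comp_add_right (fun u => u⁻¹) 1
        rw [h3, integral_inv_of_pos (by positivity) (by positivity)]
        rw [Real.log_div (by positivity) (by positivity)]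
        ring_nf

/-! ### The series -/

lemma term_integrable (n : ℕ) :
    Integrable (fun t => (-1:ℝ)^n * (t ^ n * (1 - t) / (-Real.log t)))
      (volume.restrict (Ioo (0:ℝ) 1)) := by
  apply integrable_of_bdd measurableSet_Ioo (vol_Ioo_lt_top _ _) ?_ 1
  · intro t ht
    have h1 := neg_log_pos ht
    have htn : t ^ n ≤ 1 := pow_le_one₀ ht.1.le ht.2.le
    have h1t : (0:ℝ) ≤ 1 - t := by linarith [ht.2]
    clear htn
    have htn : t ^ n ≤ 1 := pow_le_one₀ ht.1.le ht.2.le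
    have hnn : 0 ≤ t ^ n * (1 - t) / (-Real.log t) :=
      div_nonneg (mul_nonneg (pow_nonneg ht.1.le n) h1t) h1.le
    rw [Real.norm_eq_abs, abs_mul, abs_pow, abs_neg, abs_one, one_pow, one_mul,
      abs_of_nonneg hnn]
    have h6 : t ^ n * (1 - t) ≤ 1 - t := mul_le_of_le_one_left h1t htn
    calc t ^ n * (1 - t) / (-Real.log t) ≤ (1 - t) / (-Real.log t) := by gcongr
      _ ≤ 1 := one_sub_div_neg_log_le ht
  · apply Measurable.aestronglyMeasurable
    apply Measurable.const_mul
    exact ((measurable_id.pow_const n).mul (measurable_const.sub measurable_id)).div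
      Real.measurable_log.neg

lemma sum_closed {t : ℝ} (ht : t ∈ Ioo (0:ℝ) 1) (N : ℕ) :
    ∑ n ∈ Finset.range N, (-1:ℝ)^n * (t ^ n * (1 - t) / (-Real.log t))
      = (1 - (-t)^N) / (1 + t) * ((1 - t) / (-Real.log t)) := by
  have hne : (-t) ≠ 1 := by nlinarith [ht.1]
  have hterm : ∀ n, (-1:ℝ)^n * (t ^ n * (1 - t) / (-Real.log t))
      = (-t)^n * ((1-t)/(-Real.log t)) := by
    intro n
    rw [neg_pow]
    ring
  rw [Finset.sum_congr rfl (fun n _ => hterm n), ← Finset.sum_mul, geom_sum_eq hne]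
  have h1 : (-t) - 1 = -(1 + t) := by ring
  have h2 : ((-t)^N - 1) = -(1 - (-t)^N) := by ring
  rw [h1, h2, neg_div_neg_eq]

noncomputable def sig (N : ℕ) : ℝ :=
  ∑ n ∈ Finset.range N, (-1:ℝ)^n * (Real.log (n+2) - Real.log (n+1))

lemma sig_even (N : ℕ) : sig (2*N) = Real.log (Real.Wallis.W N) := by
  induction N with
  | zero => simp [sig, Real.Wallis.W]
  | succ N ih =>
    have h2 : 2*(N+1) = (2*N)+1+1 := by ring
    unfold sig at ih ⊢
    rw [h2, Finset.sum_range_succ, Finset.sum_range_succ, ih]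
    rw [Real.Wallis.W_succ]
    have e0 : ((-1:ℝ))^(2*N) = 1 := Even.neg_one_pow ⟨N, by ring⟩
    have e1 : ((-1:ℝ))^(2*N+1) = -1 := Odd.neg_one_pow ⟨N, by ring⟩
    rw [e0, e1]
    have p1 : (0:ℝ) < 2*(N:ℝ)+1 := by positivity
    have p2 : (0:ℝ) < 2*(N:ℝ)+2 := by positivity
    have p3 : (0:ℝ) < 2*(N:ℝ)+3 := by positivity
    have hA : ((2*(N:ℝ)+2)/(2*(N:ℝ)+1)) ≠ 0 := by positivity
    have hB : ((2*(N:ℝ)+2)/(2*(N:ℝ)+3)) ≠ 0 := by positivity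
    rw [Real.log_mul (Real.Wallis.W_pos N).ne' (mul_ne_zero hA hB), Real.log_mul hA hB,
      Real.log_div p2.ne' p1.ne', Real.log_div p2.ne' p3.ne']
    push_cast
    ring

lemma K_eq : ∫ t in Ioo (0:ℝ) 1, (1 - t) * gg t = Real.log (π/2) := by
  have hSN_int : ∀ N : ℕ, Integrable
      (fun t => ∑ n ∈ Finset.range N, (-1:ℝ)^n * (t ^ n * (1 - t) / (-Real.log t)))
      (volume.restrict (Ioo (0:ℝ) 1)) :=
    fun N => integrable_finset_sum _ (fun n _ => term_integrable n)
  have h_bound : ∀ N : ℕ, ∀ᵐ t ∂(volume.restrict (Ioo (0:ℝ) 1)),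
      ‖∑ n ∈ Finset.range N, (-1:ℝ)^n * (t ^ n * (1 - t) / (-Real.log t))‖ ≤ 2 := by
    intro N
    filter_upwards [ae_restrict_mem measurableSet_Ioo] with t ht
    rw [Real.norm_eq_abs, sum_closed ht N]
    have h1 := neg_log_pos ht
    have hptN : |(-t)^N| ≤ 1 := by
      rw [abs_pow, abs_neg, abs_of_pos ht.1]
      exact pow_le_one₀ ht.1.le ht.2.le
    have hb := abs_le.1 hptN
    have e1 : |(1 - (-t)^N)/(1+t)| ≤ 2 := by
      rw [abs_div, abs_of_pos (by linarith [ht.1] : (0:ℝ) < 1 + t)]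
      have hn : |1 - (-t)^N| ≤ 2 := abs_le.2 ⟨by linarith, by linarith⟩
      calc |1 - (-t)^N| / (1+t) ≤ |1 - (-t)^N| / 1 := by
            apply div_le_div_of_nonneg_left (abs_nonneg _) one_pos (by linarith [ht.1])
        _ = |1 - (-t)^N| := div_one _
        _ ≤ 2 := hn
    have e2 : |(1-t)/(-Real.log t)| ≤ 1 := by
      rw [abs_of_nonneg (div_nonneg (by linarith [ht.2]) h1.le)]
      exact one_sub_div_neg_log_le ht
    calc |(1 - (-t)^N)/(1+t) * ((1-t)/(-Real.log t))|
        = |(1 - (-t)^N)/(1+t)| * |(1-t)/(-Real.log t)| := abs_mul _ _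
      _ ≤ 2 * 1 := mul_le_mul e1 e2 (abs_nonneg _) (by norm_num)
      _ = 2 := by norm_num
  have h_lim : ∀ᵐ t ∂(volume.restrict (Ioo (0:ℝ) 1)),
      Tendsto (fun N => ∑ n ∈ Finset.range N, (-1:ℝ)^n * (t ^ n * (1 - t) / (-Real.log t)))
        atTop (𝓝 ((1 - t) * gg t)) := by
    filter_upwards [ae_restrict_mem measurableSet_Ioo] with t ht
    have hpow : Tendsto (fun N : ℕ => (-t)^N) atTop (𝓝 0) := by
      apply tendsto_pow_atTop_nhds_zero_iff.mpr
      rw [abs_neg, abs_of_pos ht.1]; exact ht.2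
    have hmain : Tendsto (fun N => (1 - (-t)^N)/(1+t) * ((1-t)/(-Real.log t))) atTop
        (𝓝 ((1 - 0)/(1+t) * ((1-t)/(-Real.log t)))) :=
      (((tendsto_const_nhds.sub hpow).div_const _).mul_const _)
    have hval : (1 - 0 : ℝ)/(1+t) * ((1-t)/(-Real.log t)) = (1 - t) * gg t := by
      unfold gg
      rw [sub_zero, mul_inv]
      field_simp
    rw [hval] at hmain
    exact Tendsto.congr (fun N => (sum_closed ht N).symm) hmain
  have hDCT := MeasureTheory.tendsto_integral_of_dominated_convergence
    (μ := volume.restrict (Ioo (0:ℝ) 1))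
    (F := fun N t => ∑ n ∈ Finset.range N, (-1:ℝ)^n * (t ^ n * (1 - t) / (-Real.log t)))
    (f := fun t => (1 - t) * gg t) (bound := fun _ => 2)
    (fun N => (hSN_int N).aestronglyMeasurable) (integrable_const 2) h_bound h_lim
  have hval : ∀ N : ℕ,
      (∫ t in Ioo (0:ℝ) 1, ∑ n ∈ Finset.range N, (-1:ℝ)^n * (t ^ n * (1 - t) / (-Real.log t)))
        = sig N := by
    intro N
    rw [integral_finset_sum _ (fun n _ => term_integrable n)]
    unfold sig
    apply Finset.sum_congr rfl
    intro n _
    rw [MeasureTheory.integral_const_mul, frullani n]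
  have hσ : Tendsto sig atTop (𝓝 (∫ t in Ioo (0:ℝ) 1, (1 - t) * gg t)) :=
    Tendsto.congr hval hDCT
  have hmono : Tendsto (fun N : ℕ => 2*N) atTop atTop := by
    apply tendsto_atTop_mono (f := fun N : ℕ => N) ?_ tendsto_id
    intro n
    show n ≤ 2 * n
    omega
  have h1 : Tendsto (fun N : ℕ => sig (2*N)) atTop
      (𝓝 (∫ t in Ioo (0:ℝ) 1, (1 - t) * gg t)) := hσ.comp hmono
  have h2 : Tendsto (fun N : ℕ => sig (2*N)) atTop (𝓝 (Real.log (π/2))) := by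
    simp only [sig_even]
    exact (Real.continuousAt_log (ne_of_gt Real.pi_div_two_pos)).tendsto.comp
      Real.Wallis.tendsto_W_nhds_pi_div_two
  exact tendsto_nhds_unique h1 h2

/-! ### Fubini on the triangle -/

noncomputable def FF (x t : ℝ) : ℝ := if t < x then (1 - x) * x⁻¹ * gg t else 0

lemma FF_meas : Measurable (Function.uncurry FF) := by
  unfold FF Function.uncurry
  exact Measurable.ite (measurableSet_lt measurable_snd measurable_fst)
    (((measurable_const.sub measurable_fst).mul measurable_fst.inv).mul
      (gg_meas.comp measurable_snd)) measurable_const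

lemma FF_meas_right (x : ℝ) : Measurable (FF x) := by
  unfold FF
  exact Measurable.ite measurableSet_Iio (measurable_const.mul gg_meas) measurable_const

lemma inner_eq {x : ℝ} (hx : x ∈ Ioc (0:ℝ) 1) :
    (∫ t in Ioo (0:ℝ) 1, FF x t) = (1 - x) * x⁻¹ * ∫ t in Ioo (0:ℝ) x, gg t := by
  have hset : Iio x ∩ Ioo 0 1 = Ioo 0 x := by
    ext t
    simp only [mem_inter_iff, mem_Iio, mem_Ioo]
    constructor
    · rintro ⟨h1, h2, _⟩; exact ⟨h2, h1⟩
    · rintro ⟨h1, h2⟩; exact ⟨h2, h1, lt_of_lt_of_le h2 hx.2⟩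
  have hind : ∀ t, FF x t = (Iio x).indicator (fun t => (1 - x) * x⁻¹ * gg t) t := by
    intro t; unfold FF; rw [indicator_apply]; simp [mem_Iio]
  simp_rw [hind]
  rw [MeasureTheory.integral_indicator measurableSet_Iio, Measure.restrict_restrict measurableSet_Iio, hset,
    MeasureTheory.integral_const_mul]

lemma slice_eq {t : ℝ} (ht : t ∈ Ioo (0:ℝ) 1) :
    (∫ x in Ioo (0:ℝ) 1, FF x t) = (-Real.log t - (1 - t)) * gg t := by
  have hset : Ioi t ∩ Ioo 0 1 = Ioo t 1 := by
    ext x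
    simp only [mem_inter_iff, mem_Ioi, mem_Ioo]
    constructor
    · rintro ⟨h1, _, h3⟩; exact ⟨h1, h3⟩
    · rintro ⟨h1, h2⟩; exact ⟨h1, lt_trans ht.1 h1, h2⟩
  have h0 : ∀ x, FF x t = (Ioi t).indicator (fun x => (1 - x) * x⁻¹ * gg t) x := by
    intro x; unfold FF; rw [indicator_apply]; simp [mem_Ioi]
  simp_rw [h0]
  rw [MeasureTheory.integral_indicator measurableSet_Ioi, Measure.restrict_restrict measurableSet_Ioi, hset,
    MeasureTheory.integral_mul_const]
  congr 1
  rw [← integral_Ioc_eq_integral_Ioo, ← intervalIntegral.integral_of_le ht.2.le]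
  have hcong : ∀ x ∈ uIcc t 1, (1 - x) * x⁻¹ = x⁻¹ - 1 := by
    intro x hx
    rw [uIcc_of_le ht.2.le] at hx
    have hx0 : x ≠ 0 := ne_of_gt (lt_of_lt_of_le ht.1 hx.1)
    field_simp
  have hint1 : IntervalIntegrable (fun x : ℝ => x⁻¹) volume t 1 := by
    apply ContinuousOn.intervalIntegrable
    apply ContinuousOn.inv₀ continuousOn_id
    intro x hx
    rw [uIcc_of_le ht.2.le] at hx
    exact ne_of_gt (lt_of_lt_of_le ht.1 hx.1)
  have hint2 : IntervalIntegrable (fun _ : ℝ => (1:ℝ)) volume t 1 :=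
    intervalIntegrable_const
  rw [intervalIntegral.integral_congr hcong, intervalIntegral.integral_sub hint1 hint2,
    integral_inv_of_pos ht.1 one_pos, intervalIntegral.integral_const, one_div, Real.log_inv,
    smul_eq_mul, mul_one]

lemma FF_int : Integrable (Function.uncurry FF)
    ((volume.restrict (Ioo (0:ℝ) 1)).prod (volume.restrict (Ioo (0:ℝ) 1))) := by
  rw [integrable_prod_iff FF_meas.aestronglyMeasurable]
  constructor
  · filter_upwards [ae_restrict_mem measurableSet_Ioo] with x hx
    apply integrable_of_bdd measurableSet_Ioo (vol_Ioo_lt_top _ _)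
      (FF_meas_right x).aestronglyMeasurable ((1-x)*x⁻¹*(-Real.log x)⁻¹)
    intro t ht
    have hlx := neg_log_pos hx
    have hc : 0 ≤ (1-x)*x⁻¹ := mul_nonneg (by linarith [hx.2]) (inv_nonneg.2 hx.1.le)
    unfold FF
    by_cases h : t < x
    · simp only [if_pos h]
      rw [Real.norm_eq_abs, abs_of_nonneg (mul_nonneg hc (gg_nonneg ht))]
      rw [mul_assoc, mul_assoc]
      apply mul_le_mul_of_nonneg_left ?_ (by linarith [hx.2] : (0:ℝ) ≤ 1 - x)
      apply mul_le_mul_of_nonneg_left ?_ (inv_nonneg.2 hx.1.le)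
      calc gg t ≤ (-Real.log t)⁻¹ := gg_le ht
        _ ≤ (-Real.log x)⁻¹ := neg_log_anti ht.1 h.le hx
    · simp only [if_neg h]
      rw [norm_zero]
      exact mul_nonneg hc (inv_nonneg.2 hlx.le)
  · simp only [Function.uncurry_apply_pair]
    apply integrable_of_bdd measurableSet_Ioo (vol_Ioo_lt_top _ _) ?_ 1
    · intro x hx
      have hlx := neg_log_pos hx
      have h1x : (0:ℝ) ≤ 1 - x := by linarith [hx.2]
      have hcx : 0 ≤ (1-x)*x⁻¹ := mul_nonneg h1x (inv_nonneg.2 hx.1.le)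
      have hgeq : ∀ t ∈ Ioo (0:ℝ) 1, ‖FF x t‖ = FF x t := by
        intro t ht
        rw [Real.norm_eq_abs, abs_of_nonneg]
        unfold FF
        by_cases h : t < x
        · simp only [if_pos h]; exact mul_nonneg hcx (gg_nonneg ht)
        · simp only [if_neg h]; exact le_refl 0
      have heq : (∫ t in Ioo (0:ℝ) 1, ‖FF x t‖) = (1-x) * x⁻¹ * ∫ t in Ioo (0:ℝ) x, gg t := by
        rw [setIntegral_congr_fun measurableSet_Ioo hgeq, inner_eq ⟨hx.1, hx.2.le⟩]
      have hgg_int : Integrable gg (volume.restrict (Ioo (0:ℝ) x)) := by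
        apply integrable_of_bdd measurableSet_Ioo (vol_Ioo_lt_top _ _)
          gg_meas.aestronglyMeasurable ((-Real.log x)⁻¹)
        intro t ht'
        have ht : t ∈ Ioo (0:ℝ) 1 := ⟨ht'.1, lt_trans ht'.2 hx.2⟩
        rw [Real.norm_eq_abs, abs_of_nonneg (gg_nonneg ht)]
        calc gg t ≤ (-Real.log t)⁻¹ := gg_le ht
          _ ≤ (-Real.log x)⁻¹ := neg_log_anti ht.1 ht'.2.le hx
      have hIb : (∫ t in Ioo (0:ℝ) x, gg t) ≤ x * (-Real.log x)⁻¹ := by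
        calc (∫ t in Ioo (0:ℝ) x, gg t) ≤ ∫ _t in Ioo (0:ℝ) x, (-Real.log x)⁻¹ := by
              apply setIntegral_mono_on hgg_int (integrable_const _) measurableSet_Ioo
              intro t ht'
              have ht : t ∈ Ioo (0:ℝ) 1 := ⟨ht'.1, lt_trans ht'.2 hx.2⟩
              calc gg t ≤ (-Real.log t)⁻¹ := gg_le ht
                _ ≤ (-Real.log x)⁻¹ := neg_log_anti ht.1 ht'.2.le hx
          _ = x * (-Real.log x)⁻¹ := by
              rw [setIntegral_const, smul_eq_mul, measureReal_def, Real.volume_Ioo, sub_zero,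
                ENNReal.toReal_ofReal hx.1.le]
      have hInn : 0 ≤ ∫ t in Ioo (0:ℝ) x, gg t :=
        setIntegral_nonneg measurableSet_Ioo
          (fun t ht' => gg_nonneg ⟨ht'.1, lt_trans ht'.2 hx.2⟩)
      rw [Real.norm_eq_abs, heq, abs_of_nonneg (mul_nonneg hcx hInn)]
      calc (1-x)*x⁻¹ * ∫ t in Ioo (0:ℝ) x, gg t
          ≤ (1-x)*x⁻¹*(x*(-Real.log x)⁻¹) := mul_le_mul_of_nonneg_left hIb hcx
        _ = (1-x)*(-Real.log x)⁻¹*(x⁻¹*x) := by ring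
        _ = (1-x)*(-Real.log x)⁻¹ := by rw [inv_mul_cancel₀ hx.1.ne', mul_one]
        _ ≤ (-Real.log x)*(-Real.log x)⁻¹ :=
            mul_le_mul_of_nonneg_right (one_sub_le_neg_log hx) (inv_nonneg.2 hlx.le)
        _ = 1 := mul_inv_cancel₀ hlx.ne'
    · exact (FF_meas.aestronglyMeasurable.norm).integral_prod_right'

lemma swapped : (∫ x in Ioo (0:ℝ) 1, ((1 - x) * x⁻¹ * ∫ t in Ioo (0:ℝ) x, gg t))
    = Real.log 2 - Real.log (π/2) := by
  have h1 : (∫ x in Ioo (0:ℝ) 1, ((1 - x) * x⁻¹ * ∫ t in Ioo (0:ℝ) x, gg t))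
      = ∫ x in Ioo (0:ℝ) 1, ∫ t in Ioo (0:ℝ) 1, FF x t := by
    apply setIntegral_congr_fun measurableSet_Ioo
    intro x hx
    exact (inner_eq ⟨hx.1, hx.2.le⟩).symm
  rw [h1, integral_integral_swap FF_int]
  have h2 : (∫ t in Ioo (0:ℝ) 1, ∫ x in Ioo (0:ℝ) 1, FF x t)
      = ∫ t in Ioo (0:ℝ) 1, ((1+t)⁻¹ - (1-t) * gg t) := by
    apply setIntegral_congr_fun measurableSet_Ioo
    intro t ht
    show (∫ x in Ioo (0:ℝ) 1, FF x t) = (1+t)⁻¹ - (1-t) * gg t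
    rw [slice_eq ht]
    have hl := neg_log_pos ht
    have h2t : (0:ℝ) < 1 + t := by linarith [ht.1]
    have key : (-Real.log t) * gg t = (1+t)⁻¹ := by
      unfold gg
      rw [mul_inv]
      field_simp
      exact div_self (neg_pos.mp hl).ne
    rw [sub_mul, key]
  rw [h2]
  have hm1 : Measurable (fun t : ℝ => (1+t)⁻¹) := (measurable_const.add measurable_id).inv
  have hint1 : Integrable (fun t : ℝ => (1+t)⁻¹) (volume.restrict (Ioo (0:ℝ) 1)) := by
    apply integrable_of_bdd measurableSet_Ioo (vol_Ioo_lt_top _ _)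
      hm1.aestronglyMeasurable 1
    intro t ht
    have h2t : (0:ℝ) < 1 + t := by linarith [ht.1]
    rw [Real.norm_eq_abs, abs_of_pos (inv_pos.2 h2t), inv_eq_one_div, div_le_one h2t]
    linarith [ht.1]
  have hm2 : Measurable (fun t : ℝ => (1-t) * gg t) := (measurable_const.sub measurable_id).mul gg_meas
  have hint2 : Integrable (fun t : ℝ => (1-t) * gg t) (volume.restrict (Ioo (0:ℝ) 1)) := by
    apply integrable_of_bdd measurableSet_Ioo (vol_Ioo_lt_top _ _)
      hm2.aestronglyMeasurable 1
    intro t ht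
    rw [Real.norm_eq_abs,
      abs_of_nonneg (mul_nonneg (by linarith [ht.2] : (0:ℝ) ≤ 1 - t) (gg_nonneg ht))]
    exact one_sub_mul_gg_le ht
  rw [integral_sub hint1 hint2, K_eq]
  congr 1
  rw [← integral_Ioc_eq_integral_Ioo, ← intervalIntegral.integral_of_le zero_le_one]
  calc (∫ t in (0:ℝ)..1, (1+t)⁻¹)
      = ∫ t in (0:ℝ)..1, (t+1)⁻¹ := by
        apply intervalIntegral.integral_congr
        intro t _
        show (1+t)⁻¹ = (t+1)⁻¹
        rw [add_comm]
    _ = ∫ u in ((0:ℝ)+1)..((1:ℝ)+1), u⁻¹ := intervalIntegral.integral_comp_add_right (fun u => u⁻¹) 1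
    _ = Real.log 2 := by
        norm_num

theorem double_integral_eq_log_four_div_pi :
    ∫ x in (0:ℝ)..1, ∫ y in (0:ℝ)..1,
        (1 - x) / ((1 + x * y) * (-Real.log (x * y)))
      = Real.log (4 / Real.pi) := by
  have houter : ∀ x ∈ Ioo (0:ℝ) 1,
      (∫ y in (0:ℝ)..1, (1 - x) / ((1 + x * y) * (-Real.log (x * y))))
        = (1 - x) * x⁻¹ * ∫ t in Ioo (0:ℝ) x, gg t := by
    intro x hx
    have e1 : (∫ y in (0:ℝ)..1, (1 - x) / ((1 + x * y) * (-Real.log (x * y))))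
        = ∫ y in (0:ℝ)..1, (1 - x) * gg (x * y) := by
      apply intervalIntegral.integral_congr
      intro y _
      simp [gg, div_eq_mul_inv]
    rw [e1, intervalIntegral.integral_const_mul,
      intervalIntegral.integral_comp_mul_left gg hx.1.ne', mul_zero, mul_one, smul_eq_mul,
      intervalIntegral.integral_of_le hx.1.le, integral_Ioc_eq_integral_Ioo]
    ring
  rw [intervalIntegral.integral_of_le zero_le_one, integral_Ioc_eq_integral_Ioo]
  have hstep : (∫ x in Ioo (0:ℝ) 1,
        ∫ y in (0:ℝ)..1, (1 - x) / ((1 + x * y) * (-Real.log (x * y))))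
      = ∫ x in Ioo (0:ℝ) 1, ((1 - x) * x⁻¹ * ∫ t in Ioo (0:ℝ) x, gg t) :=
    setIntegral_congr_fun measurableSet_Ioo houter
  rw [hstep, swapped, ← Real.log_div two_ne_zero (ne_of_gt Real.pi_div_two_pos)]
  congr 1
  have hπ : Real.pi ≠ 0 := Real.pi_ne_zero
  field_simp
  ring
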